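/- Let κ₁, κ₂ be positive reals with κ₁ < κ₂, let α ≥ 0 with α ≠ κ₁ and α ≠ κ₂, and define β_j = √(κ_j² − α²) if α < κ_j and β_j = i·√(α² − κ_j²) if α > κ_j, for j = 1, 2. Then the complex number χ = α² + β₁β₂ satisfies κ₁² < |χ| < κ₂². -/

import Mathlib

theorem stmt3 (κ₁ κ₂ α : ℝ) (hκ₁ : 0 < κ₁) (hκ : κ₁ < κ₂)
    (hα : 0 ≤ α) (hα₁ : α ≠ κ₁) (hα₂ : α ≠ κ₂)
    (β₁ β₂ : ℂ)
    (hβ₁ : β₁ = if α < κ₁ then (Real.sqrt (κ₁ ^ 2 - α ^ 2) : ℂ)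
      else Complex.I * Real.sqrt (α ^ 2 - κ₁ ^ 2))
    (hβ₂ : β₂ = if α < κ₂ then (Real.sqrt (κ₂ ^ 2 - α ^ 2) : ℂ)
      else Complex.I * Real.sqrt (α ^ 2 - κ₂ ^ 2))
    (χ : ℂ) (hχ : χ = (α : ℂ) ^ 2 + β₁ * β₂) :
    κ₁ ^ 2 < ‖χ‖ ∧ ‖χ‖ < κ₂ ^ 2 := by
  have hκ₂ : 0 < κ₂ := hκ₁.trans hκ
  rcases lt_trichotomy α κ₁ with h1 | h1 | h1
  · -- α < κ₁ < κ₂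
    have h2 : α < κ₂ := h1.trans hκ
    rw [if_pos h1] at hβ₁
    rw [if_pos h2] at hβ₂
    have ha : 0 < κ₁ ^ 2 - α ^ 2 := by nlinarith
    have hb : 0 < κ₂ ^ 2 - α ^ 2 := by nlinarith
    have hab : κ₁ ^ 2 - α ^ 2 < κ₂ ^ 2 - α ^ 2 := by nlinarith
    have key : χ = ((α ^ 2 + Real.sqrt (κ₁ ^ 2 - α ^ 2) * Real.sqrt (κ₂ ^ 2 - α ^ 2) : ℝ) : ℂ) := by
      rw [hχ, hβ₁, hβ₂]; push_cast; ring
    rw [key, Complex.norm_real, Real.norm_eq_abs]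
    have hs1 : 0 < Real.sqrt (κ₁ ^ 2 - α ^ 2) := Real.sqrt_pos.mpr ha
    have hs2 : 0 < Real.sqrt (κ₂ ^ 2 - α ^ 2) := Real.sqrt_pos.mpr hb
    have e1 : Real.sqrt (κ₁ ^ 2 - α ^ 2) ^ 2 = κ₁ ^ 2 - α ^ 2 := Real.sq_sqrt ha.le
    have e2 : Real.sqrt (κ₂ ^ 2 - α ^ 2) ^ 2 = κ₂ ^ 2 - α ^ 2 := Real.sq_sqrt hb.le
    have hlt : Real.sqrt (κ₁ ^ 2 - α ^ 2) < Real.sqrt (κ₂ ^ 2 - α ^ 2) :=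
      Real.sqrt_lt_sqrt ha.le hab
    rw [abs_of_nonneg (by positivity)]
    constructor
    · nlinarith
    · nlinarith
  · exact absurd h1 hα₁
  · -- κ₁ < α
    rw [if_neg (not_lt.mpr h1.le)] at hβ₁
    have ha : 0 < α ^ 2 - κ₁ ^ 2 := by nlinarith
    have hs1 : 0 < Real.sqrt (α ^ 2 - κ₁ ^ 2) := Real.sqrt_pos.mpr ha
    have e1 : Real.sqrt (α ^ 2 - κ₁ ^ 2) ^ 2 = α ^ 2 - κ₁ ^ 2 := Real.sq_sqrt ha.le
    rcases lt_trichotomy α κ₂ with h2 | h2 | h2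
    · -- κ₁ < α < κ₂
      rw [if_pos h2] at hβ₂
      have hb : 0 < κ₂ ^ 2 - α ^ 2 := by nlinarith
      have hs2 : 0 < Real.sqrt (κ₂ ^ 2 - α ^ 2) := Real.sqrt_pos.mpr hb
      have e2 : Real.sqrt (κ₂ ^ 2 - α ^ 2) ^ 2 = κ₂ ^ 2 - α ^ 2 := Real.sq_sqrt hb.le
      have key : χ = ((α ^ 2 : ℝ) : ℂ) +
          ((Real.sqrt (α ^ 2 - κ₁ ^ 2) * Real.sqrt (κ₂ ^ 2 - α ^ 2) : ℝ) : ℂ) * Complex.I := by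
        rw [hχ, hβ₁, hβ₂]; push_cast; ring
      have habs : ‖χ‖ ^ 2 =
          α ^ 4 + (α ^ 2 - κ₁ ^ 2) * (κ₂ ^ 2 - α ^ 2) := by
        rw [Complex.sq_norm, key, Complex.normSq_add_mul_I]
        nlinarith
      constructor
      · have h4 : (κ₁ ^ 2) ^ 2 < ‖χ‖ ^ 2 := by rw [habs]; nlinarith
        exact lt_of_pow_lt_pow_left₀ 2 (norm_nonneg χ) h4
      · have h4 : ‖χ‖ ^ 2 < (κ₂ ^ 2) ^ 2 := by rw [habs]; nlinarith
        exact lt_of_pow_lt_pow_left₀ 2 (by positivity) h4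
    · exact absurd h2 hα₂
    · -- κ₂ < α
      rw [if_neg (not_lt.mpr h2.le)] at hβ₂
      have hb : 0 < α ^ 2 - κ₂ ^ 2 := by nlinarith
      have hs2 : 0 < Real.sqrt (α ^ 2 - κ₂ ^ 2) := Real.sqrt_pos.mpr hb
      have e2 : Real.sqrt (α ^ 2 - κ₂ ^ 2) ^ 2 = α ^ 2 - κ₂ ^ 2 := Real.sq_sqrt hb.le
      have hlt : Real.sqrt (α ^ 2 - κ₂ ^ 2) < Real.sqrt (α ^ 2 - κ₁ ^ 2) :=
        Real.sqrt_lt_sqrt hb.le (by nlinarith)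
      have key : χ = ((α ^ 2 - Real.sqrt (α ^ 2 - κ₁ ^ 2) * Real.sqrt (α ^ 2 - κ₂ ^ 2) : ℝ) : ℂ) := by
        rw [hχ, hβ₁, hβ₂]
        have : Complex.I * Complex.I = -1 := Complex.I_mul_I
        push_cast
        ring_nf
        rw [Complex.I_sq]
        ring
      rw [key, Complex.norm_real, Real.norm_eq_abs]
      have hpos : κ₁ ^ 2 < α ^ 2 - Real.sqrt (α ^ 2 - κ₁ ^ 2) * Real.sqrt (α ^ 2 - κ₂ ^ 2) := by
        nlinarith
      rw [abs_of_nonneg (by nlinarith)]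
      constructor
      · exact hpos
      · nlinarith
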